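/- Let N ≥ 2. Then ℝ^N can be covered by countably many clouds; that is, there exists a countable family (C_i)_{i ∈ ℕ} of clouds in ℝ^N whose union is all of ℝ^N. -/

import Mathlib

open Set

namespace CloudAux

variable {V : Type} [AddCommGroup V] [Module ℝ V]

def line (p q : V) : Set V := {z | ∃ t : ℝ, z = p + t • (q - p)}

lemma left_mem_line (p q : V) : p ∈ line p q := ⟨0, by simp⟩
lemma right_mem_line (p q : V) : q ∈ line p q := ⟨1, by simp⟩

lemma line_self (p : V) : line p p = {p} := by
  ext z; simp [line]

/-- Two distinct points of a line determine it. -/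
lemma line_eq_of_mem {p q x y : V} (hx : x ∈ line p q) (hy : y ∈ line p q)
    (hxy : x ≠ y) : line x y = line p q := by
  obtain ⟨s, rfl⟩ := hx
  obtain ⟨u, rfl⟩ := hy
  have hsu : u - s ≠ 0 := by
    intro h
    exact hxy (by rw [sub_eq_zero.mp h])
  ext z
  constructor
  · rintro ⟨t, rfl⟩
    refine ⟨s + t * (u - s), ?_⟩
    match_scalars <;> ring
  · rintro ⟨t, rfl⟩
    have hsu' : -s + u ≠ 0 := by intro h; apply hsu; linarith
    refine ⟨(t - s) / (u - s), ?_⟩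
    match_scalars <;> (field_simp; try ring)

/-- Distinct lines meet in at most one point. -/
lemma subsingleton_inter_of_line_ne {p q r s : V} (h : line p q ≠ line r s) :
    (line p q ∩ line r s).Subsingleton := by
  intro x hx y hy
  by_contra hxy
  exact h ((line_eq_of_mem hx.1 hy.1 hxy).symm.trans (line_eq_of_mem hx.2 hy.2 hxy))

/-! ### Geometric closure -/

/-- One step of geometric closure: add intersection points of lines through points of `G`. -/
def Dstep (G : Set V) : Set V :=
  G ∪ {z | ∃ p ∈ G, ∃ q ∈ G, ∃ r ∈ G, ∃ s ∈ G,
    line p q ≠ line r s ∧ z ∈ line p q ∧ z ∈ line r s}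

lemma subset_Dstep (G : Set V) : G ⊆ Dstep G := subset_union_left

lemma Dstep_mono : Monotone (Dstep (V := V)) := by
  intro G H hGH
  apply union_subset_union hGH
  rintro z ⟨p, hp, q, hq, r, hr, s, hs, h1, h2, h3⟩
  exact ⟨p, hGH hp, q, hGH hq, r, hGH hr, s, hGH hs, h1, h2, h3⟩

/-- Geometric closure. -/
def cl (G : Set V) : Set V := ⋃ n, Dstep^[n] G

lemma subset_cl (G : Set V) : G ⊆ cl G := subset_iUnion (fun n => Dstep^[n] G) 0

lemma cl_mono : Monotone (cl (V := V)) := by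
  intro G H hGH
  exact iUnion_mono fun n => Dstep_mono.iterate n hGH

lemma iterate_le_iterate (G : Set V) {m n : ℕ} (h : m ≤ n) :
    Dstep^[m] G ⊆ Dstep^[n] G := by
  induction n with
  | zero => simp_all
  | succ n ih =>
    rcases Nat.lt_or_ge m (n+1) with h' | h'
    · rw [Function.iterate_succ_apply']
      exact (ih (Nat.lt_succ_iff.mp h')).trans (subset_Dstep _)
    · have : m = n + 1 := le_antisymm h h'
      subst this; rfl

lemma cl_inter_mem {G : Set V} {p q r s z : V} (hp : p ∈ cl G) (hq : q ∈ cl G)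
    (hr : r ∈ cl G) (hs : s ∈ cl G) (hne : line p q ≠ line r s)
    (h1 : z ∈ line p q) (h2 : z ∈ line r s) : z ∈ cl G := by
  obtain ⟨_, ⟨np, rfl⟩, hp⟩ := hp
  obtain ⟨_, ⟨nq, rfl⟩, hq⟩ := hq
  obtain ⟨_, ⟨nr, rfl⟩, hr⟩ := hr
  obtain ⟨_, ⟨ns, rfl⟩, hs⟩ := hs
  set n := max (max np nq) (max nr ns) with hn
  have hnp : np ≤ n := le_trans (le_max_left _ _) (le_max_left _ _)
  have hnq : nq ≤ n := le_trans (le_max_right _ _) (le_max_left _ _)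
  have hnr : nr ≤ n := le_trans (le_max_left _ _) (le_max_right _ _)
  have hns : ns ≤ n := le_trans (le_max_right _ _) (le_max_right _ _)
  have hp' := iterate_le_iterate G hnp hp
  have hq' := iterate_le_iterate G hnq hq
  have hr' := iterate_le_iterate G hnr hr
  have hs' := iterate_le_iterate G hns hs
  have : z ∈ Dstep^[n+1] G := by
    rw [Function.iterate_succ_apply']
    exact Or.inr ⟨p, hp', q, hq', r, hr', s, hs', hne, h1, h2⟩
  exact mem_iUnion.mpr ⟨n+1, this⟩

/-- Closure of a subset of a line stays in the line. -/
lemma cl_subset_line {G : Set V} {p₀ q₀ : V} (hG : G ⊆ line p₀ q₀) :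
    cl G ⊆ line p₀ q₀ := by
  have step : ∀ H : Set V, H ⊆ line p₀ q₀ → Dstep H ⊆ line p₀ q₀ := by
    intro H hH
    rintro z (hz | ⟨p, hp, q, hq, r, hr, s, hs, hne, h1, h2⟩)
    · exact hH hz
    · rcases eq_or_ne p q with rfl | hpq
      · rw [line_self] at h1
        rw [h1]; exact hH hp
      · rw [← line_eq_of_mem (hH hp) (hH hq) hpq]
        exact h1
  apply iUnion_subset
  intro n
  induction n with
  | zero => exact hG
  | succ n ih => rw [Function.iterate_succ_apply']; exact step _ ih

/-- `cl` has finite character. -/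
lemma cl_finite_character {G : Set V} {z : V} (hz : z ∈ cl G) :
    ∃ F : Set V, F.Finite ∧ F ⊆ G ∧ z ∈ cl F := by
  have key : ∀ n : ℕ, ∀ w : V, w ∈ Dstep^[n] G →
      ∃ F : Set V, F.Finite ∧ F ⊆ G ∧ w ∈ Dstep^[n] F := by
    intro n
    induction n with
    | zero => exact fun w hw => ⟨{w}, finite_singleton w, singleton_subset_iff.mpr hw, rfl⟩
    | succ n ih =>
      intro w hw
      rw [Function.iterate_succ_apply'] at hw
      rcases hw with hw | ⟨p, hp, q, hq, r, hr, s, hs, hne, h1, h2⟩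
      · obtain ⟨F, hF, hFG, hwF⟩ := ih w hw
        exact ⟨F, hF, hFG, iterate_le_iterate F (Nat.le_succ n) hwF⟩
      · obtain ⟨Fp, hFp, hFpG, hpF⟩ := ih p hp
        obtain ⟨Fq, hFq, hFqG, hqF⟩ := ih q hq
        obtain ⟨Fr, hFr, hFrG, hrF⟩ := ih r hr
        obtain ⟨Fs, hFs, hFsG, hsF⟩ := ih s hs
        refine ⟨Fp ∪ Fq ∪ Fr ∪ Fs, by simp [hFp, hFq, hFr, hFs],
          by simp [hFpG, hFqG, hFrG, hFsG, union_subset_iff], ?_⟩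
        rw [Function.iterate_succ_apply']
        have h4 : ∀ F' : Set V, F' ⊆ Fp ∪ Fq ∪ Fr ∪ Fs →
            Dstep^[n] F' ⊆ Dstep^[n] (Fp ∪ Fq ∪ Fr ∪ Fs) :=
          fun F' hF' => Dstep_mono.iterate n hF'
        refine Or.inr ⟨p, h4 Fp (by intro x hx; simp [hx]) hpF,
          q, h4 Fq (by intro x hx; simp [hx]) hqF,
          r, h4 Fr (by intro x hx; simp [hx]) hrF,
          s, h4 Fs (by intro x hx; simp [hx]) hsF, hne, h1, h2⟩
  obtain ⟨_, ⟨n, rfl⟩, hzn⟩ := hz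
  obtain ⟨F, hF, hFG, hzF⟩ := key n z hzn
  exact ⟨F, hF, hFG, mem_iUnion.mpr ⟨n, hzF⟩⟩

open Cardinal in
/-- Cardinality bound for the closure. -/
lemma mk_cl_le (G : Set V) : #(cl G) ≤ max #G ℵ₀ := by
  set μ := max #G ℵ₀ with hμdef
  have hμ : ℵ₀ ≤ μ := le_max_right _ _
  have step : ∀ H : Set V, #H ≤ μ → #(Dstep H) ≤ μ := by
    intro H hH
    have h2 : #{z | ∃ p ∈ H, ∃ q ∈ H, ∃ r ∈ H, ∃ s ∈ H,
        line p q ≠ line r s ∧ z ∈ line p q ∧ z ∈ line r s} ≤ μ := by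
      set T := {z | ∃ p ∈ H, ∃ q ∈ H, ∃ r ∈ H, ∃ s ∈ H,
        line p q ≠ line r s ∧ z ∈ line p q ∧ z ∈ line r s} with hT
      have : ∃ f : T → H × H × H × H, Function.Injective f := by
        have hch : ∀ z : T, ∃ w : H × H × H × H,
            line (w.1 : V) w.2.1 ≠ line (w.2.2.1 : V) w.2.2.2 ∧
            (z : V) ∈ line (w.1 : V) w.2.1 ∧ (z : V) ∈ line (w.2.2.1 : V) w.2.2.2 := by
          rintro ⟨z, p, hp, q, hq, r, hr, s, hs, hne, h1, h2⟩
          exact ⟨⟨⟨p, hp⟩, ⟨q, hq⟩, ⟨r, hr⟩, ⟨s, hs⟩⟩, hne, h1, h2⟩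
        choose f hf1 hf2 hf3 using hch
        refine ⟨f, fun z1 z2 hz => ?_⟩
        ext
        have := hf2 z1; have h3 := hf3 z1
        rw [hz] at this h3
        exact subsingleton_inter_of_line_ne (hf1 z2) ⟨this, h3⟩ ⟨hf2 z2, hf3 z2⟩
      obtain ⟨f, hf⟩ := this
      calc #T ≤ #(H × H × H × H) := mk_le_of_injective hf
        _ = #H * (#H * (#H * #H)) := by simp [mk_prod, Cardinal.lift_id]
        _ ≤ μ * (μ * (μ * μ)) := by
            gcongr <;> exact hH
        _ = μ := by
            rw [Cardinal.mul_eq_self hμ, Cardinal.mul_eq_self hμ, Cardinal.mul_eq_self hμ]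
    calc #(Dstep H) ≤ #H + _ := mk_union_le _ _
      _ ≤ μ + μ := add_le_add hH h2
      _ = μ := Cardinal.add_eq_self hμ
  have hiter : ∀ n : ℕ, #(Dstep^[n] G) ≤ μ := by
    intro n
    induction n with
    | zero => exact le_max_left _ _
    | succ n ih => rw [Function.iterate_succ_apply']; exact step _ ih
  have : #(⋃ n : ℕ, Dstep^[n] G) ≤ μ := by
    calc #(⋃ n : ℕ, Dstep^[n] G) ≤ Cardinal.sum fun n : ℕ => #(Dstep^[n] G) :=
        mk_iUnion_le_sum_mk
      _ ≤ Cardinal.sum fun _ : ℕ => μ := Cardinal.sum_le_sum _ _ hiter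
      _ = ℵ₀ * μ := by simp
      _ = μ := by rw [Cardinal.mul_eq_max le_rfl hμ, max_eq_right hμ]
  simpa [cl] using this


/-! ### Centers -/

variable (d₀ : V)

/-- The collinear centers. -/
def ctr (i : ℕ) : V := (i : ℝ) • d₀

/-- The base line. -/
def eLine : Set V := line 0 d₀

lemma ctr_mem_eLine (i : ℕ) : ctr d₀ i ∈ eLine d₀ :=
  ⟨(i : ℝ), by simp [ctr]⟩

variable {d₀}

lemma ctr_injective (hd : d₀ ≠ 0) : Function.Injective (ctr d₀) := by
  intro i j h
  have : ((i : ℝ) - j) • d₀ = 0 := by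
    rw [sub_smul, sub_eq_zero]; exact h
  rcases smul_eq_zero.mp this with h' | h'
  · exact_mod_cast Nat.cast_injective (sub_eq_zero.mp h')
  · exact absurd h' hd

lemma ne_ctr {x : V} (hx : x ∉ eLine d₀) (i : ℕ) : x ≠ ctr d₀ i :=
  fun h => hx (h ▸ ctr_mem_eLine d₀ i)

/-- For `x` off the base line, the lines from `x` to distinct centers are distinct. -/
lemma line_ctr_ne (hd : d₀ ≠ 0) {x : V} (hx : x ∉ eLine d₀) {i j : ℕ} (hij : i ≠ j) :
    line (ctr d₀ i) x ≠ line (ctr d₀ j) x := by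
  intro h
  have hcij : ctr d₀ i ≠ ctr d₀ j := fun h' => hij (ctr_injective hd h')
  have hji : ctr d₀ j ∈ line (ctr d₀ i) x := h ▸ left_mem_line _ _
  have := line_eq_of_mem (left_mem_line (ctr d₀ i) x) hji hcij
  -- line (ctr i) (ctr j) = line (ctr i) x
  have heq : line (ctr d₀ i) (ctr d₀ j) = eLine d₀ :=
    line_eq_of_mem (ctr_mem_eLine d₀ i) (ctr_mem_eLine d₀ j) hcij
  apply hx
  rw [← heq, this]
  exact right_mem_line _ _

/-- Rebase a line through a center at a second point of it. -/
lemma line_rebase {i : ℕ} {q x : V} (hx : x ∈ line (ctr d₀ i) q) (hxi : x ≠ ctr d₀ i) :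
    line (ctr d₀ i) x = line (ctr d₀ i) q :=
  line_eq_of_mem (left_mem_line _ _) hx hxi.symm

/-! ### The greedy recursion for the countable case -/

/-- Greedy choice sequence. -/
noncomputable def greedy (avoid : ℕ → (ℕ → ℕ) → Set ℕ) : ℕ → ℕ
  | n => sInf {c | c ∉ avoid n (fun m => if _ : m < n then greedy avoid m else 0)}
decreasing_by assumption

lemma greedy_def (avoid : ℕ → (ℕ → ℕ) → Set ℕ) (n : ℕ) :
    greedy avoid n = sInf {c | c ∉ avoid n (fun m => if _ : m < n then greedy avoid m else 0)} := by
  rw [greedy]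

/-- The countable case of the main lemma. -/
lemma solve_countable (hd : d₀ ≠ 0) (S : Set V) (hc : S.Countable)
    (hSe : ∀ x ∈ S, x ∉ eLine d₀) (B : V → Set ℕ) (hB : ∀ x, (B x).Finite) :
    ∃ f : V → ℕ, (∀ x ∈ S, f x ∉ B x) ∧
      ∀ i : ℕ, ∀ q : V, {x | x ∈ S ∧ f x = i ∧ x ∈ line (ctr d₀ i) q}.Finite := by
  classical
  rcases S.eq_empty_or_nonempty with rfl | hne
  · exact ⟨fun _ => 0, by simp, fun i q => by simp⟩
  obtain ⟨g, hg⟩ := hc.exists_eq_range hne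
  subst hg
  set avoid : ℕ → (ℕ → ℕ) → Set ℕ := fun n prev =>
    B (g n) ∪ {c | ∃ m, m < n ∧ prev m = c ∧ g m ≠ g n ∧ g m ∈ line (ctr d₀ c) (g n)}
    with havoid
  set h : ℕ → ℕ := greedy avoid with hh
  have hgood : ∀ n : ℕ, h n ∉ avoid n (fun m => if _ : m < n then h m else 0) := by
    intro n
    set prev : ℕ → ℕ := fun m => if _ : m < n then h m else 0 with hprev
    have hfin : (avoid n prev).Finite := by
      apply Set.Finite.union (hB _)
      apply Set.Finite.subset ((Set.finite_Iio n).image prev)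
      rintro c ⟨m, hm, rfl, -, -⟩
      exact ⟨m, hm, rfl⟩
    have hne' : {c | c ∉ avoid n prev}.Nonempty := by
      have := hfin.infinite_compl
      exact this.nonempty
    have : h n = sInf {c | c ∉ avoid n prev} := greedy_def avoid n
    rw [this]
    exact Nat.sInf_mem hne'
  set f : V → ℕ := fun x => if hx : x ∈ Set.range g then h (Nat.find hx) else 0 with hf
  have hfval : ∀ x (hx : x ∈ Set.range g), f x = h (Nat.find hx) := by
    intro x hx; simp only [hf, dif_pos hx]
  refine ⟨f, ?_, ?_⟩
  · intro x hx
    rw [hfval x hx]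
    have := hgood (Nat.find hx)
    have hgx : g (Nat.find hx) = x := Nat.find_spec hx
    intro hmem
    exact this (Or.inl (by rwa [hgx]))
  · intro i q
    -- the fiber is a subsingleton
    have key : ∀ x ∈ {x | x ∈ Set.range g ∧ f x = i ∧ x ∈ line (ctr d₀ i) q},
        ∀ y ∈ {x | x ∈ Set.range g ∧ f x = i ∧ x ∈ line (ctr d₀ i) q},
        ∀ hx : x ∈ Set.range g, ∀ hy : y ∈ Set.range g,
        Nat.find hy < Nat.find hx → False := by
      rintro x ⟨hx', hfx, hxl⟩ y ⟨hy', hfy, hyl⟩ hx hy hlt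
      have hgx : g (Nat.find hx) = x := Nat.find_spec hx
      have hgy : g (Nat.find hy) = y := Nat.find_spec hy
      have hxy : x ≠ y := by
        intro h'
        subst h'
        have : hx = hy := Subsingleton.elim _ _
        rw [this] at hlt
        exact lt_irrefl _ hlt
      have hxnotE : x ∉ eLine d₀ := hSe x hx'
      have hxctr : x ≠ ctr d₀ i := ne_ctr hxnotE i
      have hql : line (ctr d₀ i) x = line (ctr d₀ i) q := by
        rcases eq_or_ne q (ctr d₀ i) with rfl | hq
        · exfalso
          rw [line_self] at hxl
          exact hxctr hxl
        · exact line_rebase hxl hxctr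
      have hyx : y ∈ line (ctr d₀ i) x := by rw [hql]; exact hyl
      have hin : h (Nat.find hx) = i := by rw [← hfval x hx]; exact hfx
      apply hgood (Nat.find hx)
      refine Or.inr ⟨Nat.find hy, hlt, ?_, ?_, ?_⟩
      · show (if _ : Nat.find hy < Nat.find hx then h (Nat.find hy) else 0) = h (Nat.find hx)
        rw [dif_pos hlt, ← hfval y hy, hfy, hin]
      · rw [hgx, hgy]; exact fun h' => hxy h'.symm
      · rw [hin, hgx, hgy]; exact hyx
    apply Set.Subsingleton.finite
    intro x hx y hy
    by_contra hxy
    have hx' := hx.1; have hy' := hy.1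
    rcases lt_trichotomy (Nat.find hx') (Nat.find hy') with hlt | heq | hlt
    · exact key y hy x hx hy' hx' hlt
    · apply hxy
      have := Nat.find_spec hx'
      have h2 := Nat.find_spec hy'
      rw [← this, ← h2, heq]
    · exact key x hx y hy hx' hy' hlt

open Cardinal in
/-- Main lemma: coloring with finite fibers on lines through the centers,
by induction on cardinality. -/
lemma solve (hd : d₀ ≠ 0) (κ : Cardinal) :
    ∀ S : Set V, #S = κ → (∀ x ∈ S, x ∉ eLine d₀) →
    ∀ B : V → Set ℕ, (∀ x, (B x).Finite) →
    ∃ f : V → ℕ, (∀ x ∈ S, f x ∉ B x) ∧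
      ∀ i : ℕ, ∀ q : V, {x | x ∈ S ∧ f x = i ∧ x ∈ line (ctr d₀ i) q}.Finite := by
  classical
  refine Cardinal.lt_wf.induction (C := fun κ => ∀ S : Set V, #S = κ →
      (∀ x ∈ S, x ∉ eLine d₀) → ∀ B : V → Set ℕ, (∀ x, (B x).Finite) →
      ∃ f : V → ℕ, (∀ x ∈ S, f x ∉ B x) ∧
        ∀ i : ℕ, ∀ q : V, {x | x ∈ S ∧ f x = i ∧ x ∈ line (ctr d₀ i) q}.Finite) κ ?_
  intro κ IH S hκ hSe B hB
  by_cases hc : S.Countable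
  · exact solve_countable hd S hc hSe B hB
  have hκ0 : ℵ₀ < #S := by
    by_contra h
    exact hc (Set.countable_coe_iff.mp (Cardinal.mk_le_aleph0_iff.mp (not_lt.mp h)))
  subst hκ
  have hSne : S.Nonempty := by
    rcases S.eq_empty_or_nonempty with rfl | h
    · exact absurd Set.countable_empty hc
    · exact h
  obtain ⟨vdef, hvdef⟩ := hSne
  set ι := (#S).ord.ToType with hι
  have hcard : #ι = #S := by rw [hι, Cardinal.mk_toType, Cardinal.card_ord]
  obtain ⟨eqv⟩ : Nonempty (↥S ≃ ι) := Cardinal.eq.mp hcard.symm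
  set x : ι → V := fun ξ => ((eqv.symm ξ : ↥S) : V) with hxdef
  have hxinj : Function.Injective x :=
    fun a b h => eqv.symm.injective (Subtype.coe_injective h)
  set Y : ι → Set V := fun ξ => cl (Set.range (ctr d₀) ∪ x '' Set.Iic ξ) with hY
  set Ylt : ι → Set V := fun ξ => cl (Set.range (ctr d₀) ∪ x '' Set.Iio ξ) with hYlt
  have hself : ∀ v : ↥S, (v : V) ∈ Y (eqv v) := by
    intro v
    apply subset_cl
    exact Or.inr ⟨eqv v, Set.mem_Iic.mpr le_rfl, by simp [hxdef]⟩
  have hwf : WellFounded ((· < ·) : ι → ι → Prop) := wellFounded_lt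
  have hex : ∀ v ∈ S, ∃ ξ, v ∈ Y ξ := fun v hv => ⟨eqv ⟨v, hv⟩, hself ⟨v, hv⟩⟩
  set ρ : V → ι := fun v =>
    if h : ∃ ξ, v ∈ Y ξ then hwf.min {ξ | v ∈ Y ξ} h else eqv ⟨vdef, hvdef⟩ with hρdef
  have hρ1 : ∀ v ∈ S, v ∈ Y (ρ v) := by
    intro v hv
    simp only [hρdef, dif_pos (hex v hv)]
    exact hwf.min_mem _ (hex v hv)
  have hρ2 : ∀ v ∈ S, ∀ η, η < ρ v → v ∉ Y η := by
    intro v hv η hη hmem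
    rw [hρdef] at hη
    simp only [dif_pos (hex v hv)] at hη
    exact hwf.not_lt_min _ hmem hη
  have hYmono : ∀ {η ξ : ι}, η < ξ → Y η ⊆ Ylt ξ := by
    intro η ξ h
    exact cl_mono (Set.union_subset_union_right _
      (Set.image_mono (fun a ha => lt_of_le_of_lt (Set.mem_Iic.mp ha) h)))
  have hctrY : ∀ ξ : ι, ∀ k : ℕ, ctr d₀ k ∈ Ylt ξ :=
    fun ξ k => subset_cl _ (Or.inl ⟨k, rfl⟩)
  have hρ3 : ∀ v ∈ S, v ∉ Ylt (ρ v) := by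
    intro v hv hmem
    obtain ⟨F, hFfin, hFsub, hvF⟩ := cl_finite_character hmem
    set Fp : Set ι := x ⁻¹' F ∩ Set.Iio (ρ v) with hFp
    have hFpfin : Fp.Finite :=
      (Set.Finite.preimage hxinj.injOn hFfin).inter_of_left _
    have hFsub' : F ⊆ Set.range (ctr d₀) ∪ x '' Fp := by
      intro w hw
      rcases hFsub hw with h | ⟨ξ, hξ, rfl⟩
      · exact Or.inl h
      · exact Or.inr ⟨ξ, ⟨hw, hξ⟩, rfl⟩
    rcases Fp.eq_empty_or_nonempty with hFpe | hFpne
    · have hsub : F ⊆ line (0 : V) d₀ := by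
        intro w hw
        rcases hFsub' hw with h | h
        · obtain ⟨k, rfl⟩ := h; exact ctr_mem_eLine d₀ k
        · rw [hFpe] at h; simp at h
      exact hSe v hv (cl_subset_line hsub hvF)
    · obtain ⟨η, hηmem, hηmax⟩ := Set.Finite.exists_maximalFor id Fp hFpfin hFpne
      have hub : ∀ a ∈ Fp, a ≤ η := by
        intro a ha
        by_contra h
        have := hηmax ha (le_of_lt (not_le.mp h))
        simp only [id] at this
        exact h this
      have hηlt : η < ρ v := hηmem.2
      have hvY : v ∈ Y η := by
        have hsub2 : F ⊆ Set.range (ctr d₀) ∪ x '' Set.Iic η := by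
          intro w hw
          rcases hFsub' hw with h | ⟨ζ, hζ, rfl⟩
          · exact Or.inl h
          · exact Or.inr ⟨ζ, Set.mem_Iic.mpr (hub ζ hζ), rfl⟩
        exact cl_mono hsub2 hvF
      exact hρ2 v hv η hηlt hvY
  set slab : ι → Set V := fun ξ => {v | v ∈ S ∧ ρ v = ξ} with hslabdef
  have hslab : ∀ ξ, #(slab ξ) < #S := by
    intro ξ
    have h1 : slab ξ ⊆ Y ξ := fun v hv => hv.2 ▸ hρ1 v hv.1
    have hIio : #(Set.Iio ξ) < #S := Cardinal.mk_Iio_ord_toType ξ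
    have hIic : #(Set.Iic ξ) < #S := by
      have h2 : Set.Iic ξ ⊆ insert ξ (Set.Iio ξ) := by
        intro a ha
        rcases eq_or_lt_of_le (Set.mem_Iic.mp ha) with h | h
        · exact Or.inl h
        · exact Or.inr h
      calc #(Set.Iic ξ) ≤ #(insert ξ (Set.Iio ξ) : Set ι) := mk_le_mk_of_subset h2
        _ ≤ #(Set.Iio ξ) + 1 := mk_insert_le
        _ < #S := Cardinal.add_lt_of_lt (le_of_lt hκ0) hIio (lt_trans one_lt_aleph0 hκ0)
    have hgen : #(Set.range (ctr d₀) ∪ x '' Set.Iic ξ : Set V) < #S := by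
      calc #(Set.range (ctr d₀) ∪ x '' Set.Iic ξ : Set V)
          ≤ #(Set.range (ctr d₀)) + #(x '' Set.Iic ξ) := mk_union_le _ _
        _ ≤ ℵ₀ + #(Set.Iic ξ) := by
            refine add_le_add ?_ mk_image_le
            exact le_trans mk_range_le (by simp)
        _ < #S := Cardinal.add_lt_of_lt (le_of_lt hκ0) hκ0 hIic
    calc #(slab ξ) ≤ #(Y ξ) := mk_le_mk_of_subset h1
      _ ≤ max #(Set.range (ctr d₀) ∪ x '' Set.Iic ξ : Set V) ℵ₀ := mk_cl_le _
      _ < #S := max_lt hgen hκ0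
  set bad : ι → V → Set ℕ := fun ξ v =>
    {i | ∃ z ∈ Ylt ξ, z ≠ ctr d₀ i ∧ z ∈ line (ctr d₀ i) v} with hbaddef
  have hbadss : ∀ ξ, ∀ v ∈ slab ξ, (bad ξ v).Subsingleton := by
    intro ξ v hv i hi j hj
    by_contra hij
    obtain ⟨zi, hzi, hzine, hzil⟩ := hi
    obtain ⟨zj, hzj, hzjne, hzjl⟩ := hj
    have hvS := hv.1
    have hvE : v ∉ eLine d₀ := hSe v hvS
    have hlij : line (ctr d₀ i) v ≠ line (ctr d₀ j) v := line_ctr_ne hd hvE hij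
    have h1 : line (ctr d₀ i) zi = line (ctr d₀ i) v :=
      line_eq_of_mem (left_mem_line _ _) hzil hzine.symm
    have h2 : line (ctr d₀ j) zj = line (ctr d₀ j) v :=
      line_eq_of_mem (left_mem_line _ _) hzjl hzjne.symm
    have hvY : v ∈ Ylt ξ := by
      refine cl_inter_mem (hctrY ξ i) hzi (hctrY ξ j) hzj ?_ ?_ ?_
      · rw [h1, h2]; exact hlij
      · rw [h1]; exact right_mem_line _ _
      · rw [h2]; exact right_mem_line _ _
    rw [← hv.2] at hvY
    exact hρ3 v hvS hvY
  set B' : ι → V → Set ℕ := fun ξ v =>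
    B v ∪ {i | i ∈ bad ξ v ∧ (bad ξ v).Subsingleton} with hB'def
  have hB'fin : ∀ ξ v, (B' ξ v).Finite := by
    intro ξ v
    apply (hB v).union
    by_cases h : (bad ξ v).Subsingleton
    · exact Set.Subsingleton.finite (h.anti (fun i hi => hi.1))
    · have : {i | i ∈ bad ξ v ∧ (bad ξ v).Subsingleton} = ∅ := by
        ext i; simp only [Set.mem_setOf_eq, Set.mem_empty_iff_false, iff_false]
        exact fun hh => h hh.2
      rw [this]; exact Set.finite_empty
  have hch : ∀ ξ : ι, ∃ f : V → ℕ, (∀ v ∈ slab ξ, f v ∉ B' ξ v) ∧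
      ∀ i : ℕ, ∀ q : V, {v | v ∈ slab ξ ∧ f v = i ∧ v ∈ line (ctr d₀ i) q}.Finite :=
    fun ξ => IH (#(slab ξ)) (hslab ξ) (slab ξ) rfl (fun v hv => hSe v hv.1) (B' ξ) (hB'fin ξ)
  choose F hF1 hF2 using hch
  set f : V → ℕ := fun v => if v ∈ S then F (ρ v) v else 0 with hf
  have hfslab : ∀ v ∈ S, f v = F (ρ v) v := fun v hv => if_pos hv
  have hmem_slab : ∀ v ∈ S, v ∈ slab (ρ v) := fun v hv => ⟨hv, rfl⟩
  refine ⟨f, ?_, ?_⟩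
  · intro v hv hvB
    exact hF1 (ρ v) v (hmem_slab v hv) (Or.inl (by rwa [hfslab v hv] at hvB))
  · intro i q
    rcases Set.eq_empty_or_nonempty {v | v ∈ S ∧ f v = i ∧ v ∈ line (ctr d₀ i) q}
      with hfe | hfne
    · rw [hfe]; exact Set.finite_empty
    have hne' : {ξ | ∃ v, (v ∈ S ∧ f v = i ∧ v ∈ line (ctr d₀ i) q) ∧ ρ v = ξ}.Nonempty := by
      obtain ⟨v, hv⟩ := hfne
      exact ⟨ρ v, v, hv, rfl⟩
    set ξ₀ := hwf.min _ hne' with hξ₀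
    obtain ⟨v₀, hv₀fib, hv₀ρ⟩ := hwf.min_mem _ hne'
    have hmin : ∀ v, (v ∈ S ∧ f v = i ∧ v ∈ line (ctr d₀ i) q) → ¬ ρ v < ξ₀ :=
      fun v hv h => hwf.not_lt_min {ξ | ∃ v, (v ∈ S ∧ f v = i ∧ v ∈ line (ctr d₀ i) q) ∧ ρ v = ξ} ⟨v, hv, rfl⟩ h
    have hsub : {v | v ∈ S ∧ f v = i ∧ v ∈ line (ctr d₀ i) q} ⊆
        {v | v ∈ slab ξ₀ ∧ F ξ₀ v = i ∧ v ∈ line (ctr d₀ i) q} := by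
      intro v hv
      have hvS := hv.1
      have hge : ξ₀ ≤ ρ v := not_lt.mp (hmin v hv)
      rcases eq_or_lt_of_le hge with heq | hlt
      · refine ⟨⟨hvS, heq.symm⟩, ?_, hv.2.2⟩
        rw [heq, ← hfslab v hvS]
        exact hv.2.1
      · exfalso
        have hvslab : v ∈ slab (ρ v) := hmem_slab v hvS
        have hvE : v ∉ eLine d₀ := hSe v hvS
        have hv₀S := hv₀fib.1
        have hv₀Y : v₀ ∈ Ylt (ρ v) := by
          have h1 : v₀ ∈ Y (ρ v₀) := hρ1 v₀ hv₀S
          rw [hv₀ρ, ← hξ₀] at h1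
          exact hYmono hlt h1
        have hv₀ctr : v₀ ≠ ctr d₀ i := ne_ctr (hSe v₀ hv₀S) i
        have hvctr : v ≠ ctr d₀ i := ne_ctr hvE i
        have hql : line (ctr d₀ i) v = line (ctr d₀ i) q := by
          rcases eq_or_ne q (ctr d₀ i) with rfl | hq
          · exfalso
            have := hv.2.2
            rw [line_self] at this
            exact hvctr this
          · exact line_rebase hv.2.2 hvctr
        have hibad : i ∈ bad (ρ v) v :=
          ⟨v₀, hv₀Y, hv₀ctr, by rw [hql]; exact hv₀fib.2.2⟩
        apply hF1 (ρ v) v hvslab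
        have : F (ρ v) v = i := by rw [← hfslab v hvS]; exact hv.2.1
        rw [this]
        exact Or.inr ⟨hibad, hbadss (ρ v) v hvslab⟩
    exact (hF2 ξ₀ i q).subset hsub

end CloudAux

/-- `C` is a cloud around `a`: every affine line through `a` meets `C` in a finite set.
Affine lines through `a` are the sets `{a + t • v | t : ℝ}` for `v ≠ 0`. -/
def IsCloudAround {V : Type*} [AddCommGroup V] [Module ℝ V] (a : V) (C : Set V) : Prop :=
  ∀ v : V, v ≠ 0 → ({p | ∃ t : ℝ, p = a + t • v} ∩ C).Finite

open CloudAux in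
theorem countably_many_clouds_cover (N : ℕ) (hN : 2 ≤ N) :
    ∃ (a : ℕ → (Fin N → ℝ)) (C : ℕ → Set (Fin N → ℝ)),
      (∀ i, IsCloudAround (a i) (C i)) ∧ (⋃ i, C i) = Set.univ := by
  classical
  set V := Fin N → ℝ
  set i0 : Fin N := ⟨0, by omega⟩ with hi0
  set i1 : Fin N := ⟨1, by omega⟩ with hi1
  have hi01 : i1 ≠ i0 := by simp [hi0, hi1, Fin.ext_iff]
  set d₀ : V := Pi.single i0 1 with hd₀def
  set b : V := Pi.single i1 1 with hbdef
  have hd : d₀ ≠ 0 := by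
    intro h
    have h1 := congrFun h i0
    rw [hd₀def, Pi.single_eq_same, show (0 : V) i0 = (0 : ℝ) from rfl] at h1
    exact one_ne_zero h1
  have hb : b ∉ eLine d₀ := by
    rintro ⟨t, ht⟩
    have h1 := congrFun ht i1
    have hL : b i1 = (1:ℝ) := by rw [hbdef]; exact Pi.single_eq_same i1 1
    have hd1 : d₀ i1 = 0 := by rw [hd₀def]; exact Pi.single_eq_of_ne hi01 1
    have hR : (0 + t • (d₀ - 0) : V) i1 = t * d₀ i1 := by
      show (0:ℝ) + t * (d₀ i1 - 0) = t * d₀ i1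
      ring
    rw [hL, hR, hd1, mul_zero] at h1
    exact one_ne_zero h1
  -- the set off the base line
  obtain ⟨f, -, hfib⟩ := solve hd (Cardinal.mk ((eLine d₀)ᶜ : Set V)) (eLine d₀)ᶜ rfl
    (fun x hx => hx) (fun _ => (∅ : Set ℕ)) (fun _ => Set.finite_empty)
  -- the cloud family
  refine ⟨fun n => Nat.rec b (fun i _ => ctr d₀ i) n,
    fun n => Nat.rec (eLine d₀) (fun i _ => {v | v ∈ (eLine d₀)ᶜ ∧ f v = i}) n, ?_, ?_⟩
  · rintro (_ | i) v hv
    · -- the base line is a cloud around `b`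
      apply Set.Subsingleton.finite
      rintro p ⟨⟨tp, hp⟩, hpE⟩ q ⟨⟨tq, hq⟩, hqE⟩
      by_contra hpq
      have hmem : ∀ z w : V, (∃ t : ℝ, w = z + t • v) → w ∈ line z (z + v) := by
        rintro z w ⟨t, rfl⟩
        exact ⟨t, by rw [add_sub_cancel_left]⟩
      have h1 : line p q = line b (b + v) :=
        line_eq_of_mem (hmem b p ⟨tp, hp⟩) (hmem b q ⟨tq, hq⟩) hpq
      have h2 : line p q = eLine d₀ := line_eq_of_mem hpE hqE hpq
      apply hb
      rw [← h2, h1]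
      exact left_mem_line _ _
    · -- the `i`-th color class is a cloud around `ctr d₀ i`
      have heq : {p : V | ∃ t : ℝ, p = ctr d₀ i + t • v} ∩
          {v | v ∈ (eLine d₀)ᶜ ∧ f v = i} ⊆
          {x | x ∈ ((eLine d₀)ᶜ : Set V) ∧ f x = i ∧ x ∈ line (ctr d₀ i) (ctr d₀ i + v)} := by
        rintro p ⟨⟨t, rfl⟩, hp1, hp2⟩
        exact ⟨hp1, hp2, ⟨t, by rw [add_sub_cancel_left]⟩⟩
      exact (hfib i (ctr d₀ i + v)).subset heq
  · ext p
    simp only [Set.mem_iUnion, Set.mem_univ, iff_true]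
    by_cases hp : p ∈ eLine d₀
    · exact ⟨0, hp⟩
    · exact ⟨f p + 1, hp, rfl⟩
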